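/- arXiv:1707.01971 — 7 statements merged into one kernel-verified Lean document; each statement's English description precedes it below -/
import Mathlib

section
/- If ℓ_1,...,ℓ_D are K-linearly independent elements of Q*, where D = dim_K Q, then ann(u_{ℓ_1},...,u_{ℓ_D}) = ker(u_{ℓ_1},...,u_{ℓ_D}) = I. -/
open MvPolynomial

/-- `⟨u ∣ f⟩ = ∑_m f_m u(m)`, the pairing of a sequence `u : ℕ^n → K`
with a polynomial `f ∈ K[X_1,…,X_n]`. -/
noncomputable def seqBracket {K : Type*} [Field K] {n : ℕ}
    (u : (Fin n →₀ ℕ) → K) (f : MvPolynomial (Fin n) K) : K :=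
  ∑ m ∈ f.support, coeff m f * u m

/-- The action of polynomials on sequences: `(f·u)(m) = ⟨u ∣ X^m f⟩`. -/
noncomputable def seqAct {K : Type*} [Field K] {n : ℕ}
    (f : MvPolynomial (Fin n) K) (u : (Fin n →₀ ℕ) → K) : (Fin n →₀ ℕ) → K :=
  fun m => seqBracket u (monomial m 1 * f)

/-- The sequence `u_ℓ(m) = ℓ(X^m mod I)` attached to a linear form `ℓ` on `K[X]/I`. -/
noncomputable def useq {K : Type*} [Field K] {n : ℕ}
    (I : Ideal (MvPolynomial (Fin n) K))
    (ℓ : Module.Dual K (MvPolynomial (Fin n) K ⧸ I)) : (Fin n →₀ ℕ) → K :=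
  fun m => ℓ (Ideal.Quotient.mk I (monomial m 1))

lemma seqBracket_useq {K : Type*} [Field K] {n : ℕ}
    (I : Ideal (MvPolynomial (Fin n) K))
    (ℓ : Module.Dual K (MvPolynomial (Fin n) K ⧸ I)) (f : MvPolynomial (Fin n) K) :
    seqBracket (useq I ℓ) f = ℓ (Ideal.Quotient.mk I f) := by
  set L : MvPolynomial (Fin n) K →ₗ[K] K :=
    ℓ.comp (Ideal.Quotient.mkₐ K I).toLinearMap with hL
  have hLf : ℓ (Ideal.Quotient.mk I f) = L f := rfl
  rw [hLf]
  conv_rhs => rw [f.as_sum, map_sum]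
  rw [seqBracket]
  refine Finset.sum_congr rfl fun m hm => ?_
  have : (monomial m) (coeff m f) = coeff m f • (monomial m) (1 : K) := by
    rw [smul_monomial, smul_eq_mul, mul_one]
  rw [this, map_smul, smul_eq_mul]
  rfl

theorem stmt2 {K : Type*} [Field K] {n : ℕ} (hn : 1 ≤ n)
    (I : Ideal (MvPolynomial (Fin n) K))
    (hI : FiniteDimensional K (MvPolynomial (Fin n) K ⧸ I))
    (ℓ : Fin (Module.finrank K (MvPolynomial (Fin n) K ⧸ I)) →
        Module.Dual K (MvPolynomial (Fin n) K ⧸ I))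
    (hind : LinearIndependent K ℓ) :
    (∀ f : MvPolynomial (Fin n) K,
        (∀ i, seqAct f (useq I (ℓ i)) = 0) ↔ f ∈ I) ∧
    (∀ f : MvPolynomial (Fin n) K,
        (∀ i, seqBracket (useq I (ℓ i)) f = 0) ↔ f ∈ I) := by
  have hspan : Submodule.span K (Set.range ℓ) = ⊤ :=
    hind.span_eq_top_of_card_eq_finrank' (by
      simp [Subspace.dual_finrank_eq])
  have key : ∀ f : MvPolynomial (Fin n) K, (∀ i, ℓ i (Ideal.Quotient.mk I f) = 0) → f ∈ I := by
    intro f hf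
    have : ∀ φ : Module.Dual K (MvPolynomial (Fin n) K ⧸ I), φ (Ideal.Quotient.mk I f) = 0 := by
      intro φ
      have hφ : φ ∈ Submodule.span K (Set.range ℓ) := hspan ▸ Submodule.mem_top
      induction hφ using Submodule.span_induction with
      | mem x hx => obtain ⟨i, rfl⟩ := hx; exact hf i
      | zero => simp
      | add x y _ _ hx hy => simp [hx, hy]
      | smul c x _ hx => simp [hx]
    have := (Module.forall_dual_apply_eq_zero_iff K (Ideal.Quotient.mk I f)).mp this
    rwa [Ideal.Quotient.eq_zero_iff_mem] at this
  constructor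
  · intro f
    constructor
    · intro h
      apply key
      intro i
      have := congrFun (h i) 0
      simpa [seqAct, seqBracket_useq, map_one] using this
    · intro hf i
      funext m
      simp only [seqAct, seqBracket_useq, Pi.zero_apply]
      rw [Ideal.Quotient.eq_zero_iff_mem.mpr (Ideal.mul_mem_left I _ hf), map_zero]
  · intro f
    constructor
    · intro h
      exact key f fun i => by rw [← seqBracket_useq]; exact h i
    · intro hf i
      rw [seqBracket_useq, (Ideal.Quotient.eq_zero_iff_mem).mpr hf, map_zero]
end

section
/- Let n ≥ 1 and δ ≥ 1, and let u : ℕ^n → K be the sequence with u(m) = 1 if m_1 + ... + m_n < δ and u(m) = 0 otherwise. Then ann(u) is the ideal ⟨X_1 − X_n, ..., X_{n−1} − X_n, X_n^δ⟩ of K[X_1,...,X_n], and dim_K K[X_1,...,X_n]/ann(u) = δ. -/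
open MvPolynomial

section Aux

variable {K : Type*} [Field K] {n : ℕ}

lemma seqBracket_add (u : (Fin n →₀ ℕ) → K) (f g : MvPolynomial (Fin n) K) :
    seqBracket u (f + g) = seqBracket u f + seqBracket u g := by
  have hs : ∀ p : MvPolynomial (Fin n) K,
      seqBracket u p = (AddMonoidAlgebra.coeff p).sum (fun m c => c * u m) :=
    fun p => (MvPolynomial.sum_def (p := p) (b := fun m c => c * u m)).symm
  rw [hs, hs, hs, AddMonoidAlgebra.coeff_add]
  exact Finsupp.sum_add_index' (fun _ => zero_mul _) (fun _ b₁ b₂ => add_mul _ _ _)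

lemma seqBracket_monomial (u : (Fin n →₀ ℕ) → K) (k : Fin n →₀ ℕ) (c : K) :
    seqBracket u (monomial k c) = c * u k := by
  rw [seqBracket, ← MvPolynomial.sum_def (b := fun m c => c * u m), MvPolynomial.sum_monomial_eq (zero_mul (u k))]

lemma seqBracket_smul (u : (Fin n →₀ ℕ) → K) (c : K) (f : MvPolynomial (Fin n) K) :
    seqBracket u (c • f) = c * seqBracket u f := by
  induction f using MvPolynomial.induction_on' with
  | monomial k d => rw [MvPolynomial.smul_monomial, seqBracket_monomial, seqBracket_monomial,
      smul_eq_mul, mul_assoc]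
  | add f g hf hg => rw [smul_add, seqBracket_add, seqBracket_add, hf, hg, mul_add]

lemma seqBracket_sub (u : (Fin n →₀ ℕ) → K) (f g : MvPolynomial (Fin n) K) :
    seqBracket u (f - g) = seqBracket u f - seqBracket u g := by
  have := seqBracket_add u (f - g) g
  rw [sub_add_cancel] at this
  exact eq_sub_of_add_eq this.symm

lemma sub_mem_J (f : MvPolynomial (Fin (n+1)) K) :
    f - Polynomial.aeval (X (Fin.last n))
        (MvPolynomial.aeval (fun _ => (Polynomial.X : Polynomial K)) f) ∈
      Ideal.span (Set.range fun i : Fin n =>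
        (X i.castSucc - X (Fin.last n) : MvPolynomial (Fin (n+1)) K)) := by
  set J := Ideal.span (Set.range fun i : Fin n =>
        (X i.castSucc - X (Fin.last n) : MvPolynomial (Fin (n+1)) K))
  have key : (Ideal.Quotient.mkₐ K J) =
      (Ideal.Quotient.mkₐ K J).comp ((Polynomial.aeval (X (Fin.last n))).comp
        (MvPolynomial.aeval (fun _ => (Polynomial.X : Polynomial K)))) := by
    apply MvPolynomial.algHom_ext
    intro i
    simp only [Ideal.Quotient.mkₐ_eq_mk, AlgHom.comp_apply, aeval_X, Polynomial.aeval_X]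
    rw [Ideal.Quotient.eq]
    induction i using Fin.lastCases with
    | last => simp
    | cast i => exact Ideal.subset_span ⟨i, rfl⟩
  have := DFunLike.congr_fun key f
  simp only [Ideal.Quotient.mkₐ_eq_mk, AlgHom.comp_apply] at this
  exact (Ideal.Quotient.eq).mp this

lemma mem_I_of_dvd (δ : ℕ) (f : MvPolynomial (Fin (n+1)) K)
    (h : (Polynomial.X : Polynomial K) ^ δ ∣
        MvPolynomial.aeval (fun _ => (Polynomial.X : Polynomial K)) f) :
    f ∈ Ideal.span
      ((Set.range fun i : Fin n =>
          (X i.castSucc - X (Fin.last n) : MvPolynomial (Fin (n + 1)) K)) ∪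
        {(X (Fin.last n) : MvPolynomial (Fin (n + 1)) K) ^ δ}) := by
  obtain ⟨q, hq⟩ := h
  set g := Polynomial.aeval (X (Fin.last n) : MvPolynomial (Fin (n+1)) K)
      (MvPolynomial.aeval (fun _ => (Polynomial.X : Polynomial K)) f) with hg
  have h1 : f - g ∈ Ideal.span ((Set.range fun i : Fin n =>
          (X i.castSucc - X (Fin.last n) : MvPolynomial (Fin (n + 1)) K)) ∪
        {(X (Fin.last n) : MvPolynomial (Fin (n + 1)) K) ^ δ}) := by
    apply Ideal.span_mono Set.subset_union_left
    exact sub_mem_J f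
  have h2 : g ∈ Ideal.span ((Set.range fun i : Fin n =>
          (X i.castSucc - X (Fin.last n) : MvPolynomial (Fin (n + 1)) K)) ∪
        {(X (Fin.last n) : MvPolynomial (Fin (n + 1)) K) ^ δ}) := by
    rw [hg, hq, map_mul, map_pow, Polynomial.aeval_X]
    exact Ideal.mul_mem_right _ _
      (Ideal.subset_span (Set.mem_union_right _ rfl))
  simpa using add_mem h1 h2

lemma ann_mul_left (u : (Fin n →₀ ℕ) → K) (f : MvPolynomial (Fin n) K)
    (hf : ∀ m, seqBracket u (monomial m 1 * f) = 0)
    (g : MvPolynomial (Fin n) K) :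
    ∀ m, seqBracket u (monomial m 1 * (g * f)) = 0 := by
  induction g using MvPolynomial.induction_on' with
  | monomial k c =>
    intro m
    have : monomial m (1 : K) * (monomial k c * f) = c • (monomial (m + k) 1 * f) := by
      rw [← smul_mul_assoc, MvPolynomial.smul_monomial, smul_eq_mul, mul_one,
        ← mul_assoc, MvPolynomial.monomial_mul, one_mul]
    rw [this, seqBracket_smul, hf, mul_zero]
  | add g₁ g₂ h₁ h₂ =>
    intro m
    rw [add_mul, mul_add, seqBracket_add, h₁ m, h₂ m, add_zero]

lemma sum_add_single (m : Fin n →₀ ℕ) (a : Fin n) (k : ℕ) :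
    ((m + Finsupp.single a k).sum fun _ e => e) = (m.sum fun _ e => e) + k := by
  rw [Finsupp.sum_add_index' (fun _ => rfl) (fun _ _ _ => rfl),
    Finsupp.sum_single_index rfl]

lemma seqBracket_aeval (u : (Fin (n+1) →₀ ℕ) → K) (q : Polynomial K) (m : Fin (n+1) →₀ ℕ) :
    seqBracket u (monomial m 1 * Polynomial.aeval (X (Fin.last n)) q) =
      q.sum fun j c => c * u (m + Finsupp.single (Fin.last n) j) := by
  induction q using Polynomial.induction_on' with
  | add p r hp hr =>
    rw [map_add, mul_add, seqBracket_add, hp, hr]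
    exact (Polynomial.sum_add_index p r
      (fun j c => c * u (m + Finsupp.single (Fin.last n) j))
      (fun _ => zero_mul _) (fun _ _ _ => add_mul _ _ _)).symm
  | monomial j c =>
    rw [Polynomial.aeval_monomial, Polynomial.sum_monomial_index c
      (fun j c => c * u (m + Finsupp.single (Fin.last n) j)) (zero_mul _)]
    have : (algebraMap K (MvPolynomial (Fin (n+1)) K)) c *
        (X (Fin.last n) : MvPolynomial (Fin (n+1)) K) ^ j =
        monomial (Finsupp.single (Fin.last n) j) c := by
      rw [MvPolynomial.X_pow_eq_monomial, MvPolynomial.algebraMap_eq,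
        MvPolynomial.C_mul_monomial, mul_one]
    rw [this, MvPolynomial.monomial_mul, one_mul, seqBracket_monomial]

end Aux

/-- With `n+1 ≥ 1` variables `X_1,…,X_{n+1}` (so `X_{n+1}` is the
last one), let `u(m) = 1` if `m_1 + … + m_{n+1} < δ` and `0` otherwise. Then
`ann(u) = ⟨X_1 − X_{n+1}, …, X_n − X_{n+1}, X_{n+1}^δ⟩` and the quotient of the
polynomial ring by `ann(u)` has `K`-dimension `δ`. -/
theorem stmt8 {K : Type*} [Field K] (n : ℕ) (δ : ℕ) (hδ : 1 ≤ δ)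
    (u : (Fin (n + 1) →₀ ℕ) → K)
    (hu : ∀ m : Fin (n + 1) →₀ ℕ,
        u m = if (m.sum fun _ e => e) < δ then 1 else 0) :
    (∀ f : MvPolynomial (Fin (n + 1)) K,
        seqAct f u = 0 ↔
          f ∈ Ideal.span
            ((Set.range fun i : Fin n =>
                (X i.castSucc - X (Fin.last n) : MvPolynomial (Fin (n + 1)) K)) ∪
              {(X (Fin.last n) : MvPolynomial (Fin (n + 1)) K) ^ δ})) ∧
    Module.finrank K (MvPolynomial (Fin (n + 1)) K ⧸
        Ideal.span
          ((Set.range fun i : Fin n =>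
              (X i.castSucc - X (Fin.last n) : MvPolynomial (Fin (n + 1)) K)) ∪
            {(X (Fin.last n) : MvPolynomial (Fin (n + 1)) K) ^ δ})) = δ := by
  set S := (Set.range fun i : Fin n =>
      (X i.castSucc - X (Fin.last n) : MvPolynomial (Fin (n + 1)) K)) ∪
    {(X (Fin.last n) : MvPolynomial (Fin (n + 1)) K) ^ δ} with hS
  set I := Ideal.span S with hI
  -- the generators annihilate `u`
  have hgen : ∀ x ∈ S, ∀ m : Fin (n+1) →₀ ℕ, seqBracket u (monomial m 1 * x) = 0 := by
    rintro x (⟨i, rfl⟩ | rfl) m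
    · rw [mul_sub]
      have hX : ∀ a : Fin (n+1), monomial m (1:K) * X a = monomial (m + Finsupp.single a 1) 1 := by
        intro a
        rw [← pow_one (X a : MvPolynomial (Fin (n+1)) K), MvPolynomial.X_pow_eq_monomial,
          MvPolynomial.monomial_mul, one_mul]
      rw [hX, hX, seqBracket_sub, seqBracket_monomial, seqBracket_monomial,
        hu, hu, sum_add_single, sum_add_single, sub_self]
    · rw [MvPolynomial.X_pow_eq_monomial, MvPolynomial.monomial_mul, one_mul,
        seqBracket_monomial, hu, sum_add_single]
      have : ¬ ((m.sum fun _ e => e) + δ < δ) := by omega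
      rw [if_neg this, mul_zero]
  -- everything in the ideal annihilates `u`
  have hann : ∀ f ∈ I, ∀ m : Fin (n+1) →₀ ℕ, seqBracket u (monomial m 1 * f) = 0 := by
    intro f hf
    refine Submodule.span_induction ?_ ?_ ?_ ?_ hf
    · exact hgen
    · intro m; rw [mul_zero]; simpa using seqBracket_monomial u m 0
    · intro x y _ _ hx hy m
      rw [mul_add, seqBracket_add, hx m, hy m, add_zero]
    · intro a x _ hx m
      rw [smul_eq_mul]
      exact ann_mul_left u x hx a m
  constructor
  · intro f
    constructor
    · -- forward: annihilation implies membership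
      intro hf
      have H : ∀ m : Fin (n+1) →₀ ℕ, seqBracket u (monomial m 1 * f) = 0 := by
        intro m
        have := congrFun hf m
        simpa [seqAct] using this
      set p := MvPolynomial.aeval (fun _ => (Polynomial.X : Polynomial K)) f with hp
      set g := Polynomial.aeval (X (Fin.last n) : MvPolynomial (Fin (n+1)) K) p with hgdef
      have hsub : f - g ∈ I := Ideal.span_mono Set.subset_union_left (sub_mem_J f)
      have Hg : ∀ m : Fin (n+1) →₀ ℕ, seqBracket u (monomial m 1 * g) = 0 := by
        intro m
        have h1 := hann (f - g) hsub m
        rw [mul_sub, seqBracket_sub, H m, zero_sub, neg_eq_zero] at h1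
        exact h1
      have hT : ∀ s : ℕ, (p.sum fun j c => if s + j < δ then c else 0) = 0 := by
        intro s
        have h1 := Hg (Finsupp.single (Fin.last n) s)
        rw [hgdef, seqBracket_aeval] at h1
        have h2 : (p.sum fun j c => if s + j < δ then c else 0) =
            p.sum fun j c => c * u (Finsupp.single (Fin.last n) s +
              Finsupp.single (Fin.last n) j) := by
          rw [Polynomial.sum_def, Polynomial.sum_def]
          refine Finset.sum_congr rfl fun j _ => ?_
          rw [hu, ← Finsupp.single_add, Finsupp.sum_single_index rfl]
          split_ifs <;> simp
        rw [h2, h1]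
      have hcoeff : ∀ j < δ, p.coeff j = 0 := by
        intro j hj
        have h1 := hT (δ - 1 - j)
        have h2 := hT (δ - j)
        have key : (p.sum fun j' c => if (δ - 1 - j) + j' < δ then c else 0) -
            (p.sum fun j' c => if (δ - j) + j' < δ then c else 0) = p.coeff j := by
          rw [Polynomial.sum_def, Polynomial.sum_def, ← Finset.sum_sub_distrib]
          have : ∀ j' ∈ p.support,
              ((if (δ - 1 - j) + j' < δ then p.coeff j' else 0) -
               (if (δ - j) + j' < δ then p.coeff j' else 0)) =
              (if j' = j then p.coeff j' else 0) := by
            intro j' _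
            split_ifs <;> first | (exfalso; omega) | ring1
          rw [Finset.sum_congr rfl this, Finset.sum_ite_eq' p.support j (fun j' => p.coeff j')]
          split_ifs with h
          · rfl
          · exact (Polynomial.notMem_support_iff.mp h).symm
        rw [h1, h2, sub_zero] at key
        exact key.symm
      exact mem_I_of_dvd δ f (Polynomial.X_pow_dvd_iff.mpr hcoeff)
    · -- backward: membership implies annihilation
      intro hf
      funext m
      simpa [seqAct] using hann f hf m
  · -- the dimension count
    set φ : MvPolynomial (Fin (n+1)) K →ₐ[K] AdjoinRoot ((Polynomial.X : Polynomial K) ^ δ) :=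
      MvPolynomial.aeval (fun _ => AdjoinRoot.root ((Polynomial.X : Polynomial K) ^ δ)) with hφ
    have hroot : (AdjoinRoot.root ((Polynomial.X : Polynomial K) ^ δ)) ^ δ = 0 := by
      rw [← AdjoinRoot.mk_X, ← map_pow, AdjoinRoot.mk_self]
    have hIker : I ≤ RingHom.ker φ := by
      rw [hI, hS, Ideal.span_le]
      rintro x (⟨i, rfl⟩ | rfl)
      · simp [RingHom.mem_ker, hφ]
      · simp [RingHom.mem_ker, hφ, hroot]
    have hker : RingHom.ker φ = I := by
      refine le_antisymm ?_ hIker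
      intro f hf
      rw [RingHom.mem_ker] at hf
      set g := Polynomial.aeval (X (Fin.last n) : MvPolynomial (Fin (n+1)) K)
          (MvPolynomial.aeval (fun _ => (Polynomial.X : Polynomial K)) f) with hg
      have hsub : f - g ∈ I := Ideal.span_mono Set.subset_union_left (sub_mem_J f)
      have hφg : φ g = 0 := by
        have : φ (f - g) = 0 := hIker hsub
        rw [map_sub, hf, zero_sub, neg_eq_zero] at this
        exact this
      rw [hg, ← Polynomial.aeval_algHom_apply, hφ] at hφg
      simp only [aeval_X] at hφg
      rw [AdjoinRoot.aeval_eq, AdjoinRoot.mk_eq_zero] at hφg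
      exact mem_I_of_dvd δ f hφg
    have hsurj : Function.Surjective φ := by
      intro z
      obtain ⟨q, rfl⟩ := AdjoinRoot.mk_surjective z
      refine ⟨Polynomial.aeval (X (Fin.last n)) q, ?_⟩
      rw [← Polynomial.aeval_algHom_apply, hφ]
      simp only [aeval_X]
      rw [AdjoinRoot.aeval_eq]
    have e1 : (MvPolynomial (Fin (n+1)) K ⧸ I) ≃ₐ[K]
        (MvPolynomial (Fin (n+1)) K ⧸ RingHom.ker φ) :=
      Ideal.quotientEquivAlgOfEq K hker.symm
    have e2 := Ideal.quotientKerAlgEquivOfSurjective hsurj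
    have e := (e1.trans e2).toLinearEquiv
    rw [e.finrank_eq]
    have hne : (Polynomial.X : Polynomial K) ^ δ ≠ 0 := pow_ne_zero _ Polynomial.X_ne_zero
    rw [PowerBasis.finrank (AdjoinRoot.powerBasis hne), AdjoinRoot.powerBasis_dim,
      Polynomial.natDegree_X_pow]
end

section
/- Let J be a proper zero-dimensional ideal of K[X_1,...,X_n] with D = dim_K K[X_1,...,X_n]/J, and let b_1 < ... < b_D be the standard monomials of J for the lexicographic order with X_1 > ... > X_n. If f_1 < ... < f_D are monomials whose residues modulo J are K-linearly independent, then b_m ≤ f_m for every m = 1,...,D; that is, the standard monomials form the lexicographically smallest increasing sequence of D monomials that is linearly independent modulo J. -/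
set_option maxHeartbeats 1000000
set_option synthInstance.maxHeartbeats 400000


open MvPolynomial

/-- `a` is the leading monomial (for the lex order where earlier variables are
bigger) of the nonzero polynomial `f`. -/
def IsLeadMon {K : Type*} [Field K] {σ : Type*} [LinearOrder σ]
    (f : MvPolynomial σ K) (a : σ →₀ ℕ) : Prop :=
  a ∈ f.support ∧ ∀ b ∈ f.support, toLex b ≤ toLex a

/-- `a` is a standard monomial of the ideal `J` for the lexicographic order with
`X_1 > … > X_n`: it is not the leading monomial of any nonzero element of `J`. -/
def IsStdMon {K : Type*} [Field K] {σ : Type*} [LinearOrder σ]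
    (J : Ideal (MvPolynomial σ K)) (a : σ →₀ ℕ) : Prop :=
  ¬ ∃ f ∈ J, f ≠ 0 ∧ IsLeadMon f a

/-- Every monomial is, modulo `J`, in the span of the standard monomials that are
lexicographically at most it. -/
lemma key_span {K : Type*} [Field K] {n : ℕ}
    (J : Ideal (MvPolynomial (Fin n) K)) {D : ℕ} (b : Fin D → (Fin n →₀ ℕ))
    (hball : ∀ a : Fin n →₀ ℕ, IsStdMon J a → ∃ i, b i = a)
    (a : Fin n →₀ ℕ) :
    Ideal.Quotient.mk J (monomial a (1 : K)) ∈
      Submodule.span K ((fun i => Ideal.Quotient.mk J (monomial (b i) (1 : K))) ''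
        {i | toLex (b i) ≤ toLex a}) := by
  classical
  haveI := Finsupp.Lex.wellFoundedLT_of_finite (α := Fin n) (N := ℕ)
  have hwf : WellFounded (fun x y : (Fin n →₀ ℕ) => toLex x < toLex y) :=
    InvImage.wf toLex IsWellFounded.wf
  induction a using hwf.induction with
  | _ a IH =>
    by_cases hstd : IsStdMon J a
    · obtain ⟨i, hi⟩ := hball a hstd
      exact Submodule.subset_span ⟨i, by simp [hi], by simp [hi]⟩
    · rw [IsStdMon, not_not] at hstd
      obtain ⟨g, hgJ, hg0, hga, hgmax⟩ := hstd
      have hc : g.coeff a ≠ 0 := mem_support_iff.mp hga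
      set h : MvPolynomial (Fin n) K := monomial a (1 : K) - (g.coeff a)⁻¹ • g with hh
      have hmk : Ideal.Quotient.mk J (monomial a (1 : K)) = Ideal.Quotient.mk J h := by
        rw [Ideal.Quotient.mk_eq_mk_iff_sub_mem]
        simpa [hh] using J.smul_of_tower_mem ((g.coeff a)⁻¹) hgJ
      have hsup : ∀ d ∈ h.support, toLex d < toLex a := by
        intro d hd
        have hd' : h.coeff d ≠ 0 := mem_support_iff.mp hd
        have hda : d ≠ a := by
          rintro rfl
          apply hd'
          simp [hh, coeff_sub, coeff_monomial, coeff_smul, smul_eq_mul,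
            inv_mul_cancel₀ hc]
        have hdg : d ∈ g.support := by
          rw [mem_support_iff]
          intro h0
          apply hd'
          simp [hh, coeff_sub, coeff_monomial, coeff_smul, smul_eq_mul, h0,
            Ne.symm hda]
        have hle := hgmax d hdg
        exact lt_of_le_of_ne hle (fun e => hda (toLex.injective e))
      rw [hmk, (as_sum h), map_sum]
      apply Submodule.sum_mem
      intro d hd
      have hmono : monomial d (h.coeff d) = C (h.coeff d) * monomial d (1 : K) := by
        rw [C_mul_monomial, mul_one]
      have halg : (Ideal.Quotient.mk J) (C (h.coeff d)) = algebraMap K _ (h.coeff d) := rfl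
      rw [hmono, map_mul, halg, ← Algebra.smul_def]
      apply Submodule.smul_mem
      exact Submodule.span_mono
        (Set.image_mono (fun i hi => le_trans hi (le_of_lt (hsup d hd))))
        (IH d (hsup d hd))

/-- Let `J` be a proper zero-dimensional ideal with
`D = dim_K K[X]/J` and let `b_1 < … < b_D` be its standard monomials for the
lex order with `X_1 > … > X_n`. If `f_1 < … < f_D` are monomials whose residues
modulo `J` are `K`-linearly independent, then `b_m ≤ f_m` for all `m`. -/
theorem stmt11 {K : Type*} [Field K] {n : ℕ} (hn : 1 ≤ n)
    (J : Ideal (MvPolynomial (Fin n) K)) (hJ : J ≠ ⊤)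
    (hfin : FiniteDimensional K (MvPolynomial (Fin n) K ⧸ J))
    (D : ℕ) (hD : D = Module.finrank K (MvPolynomial (Fin n) K ⧸ J))
    (b : Fin D → (Fin n →₀ ℕ))
    (hbmono : StrictMono fun i => toLex (b i))
    (hbstd : ∀ i, IsStdMon J (b i))
    (hball : ∀ a : Fin n →₀ ℕ, IsStdMon J a → ∃ i, b i = a)
    (f : Fin D → (Fin n →₀ ℕ))
    (hfmono : StrictMono fun i => toLex (f i))
    (hfind : LinearIndependent K
        fun i => Ideal.Quotient.mk J (monomial (f i) (1 : K)))
    (m : Fin D) :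
    toLex (b m) ≤ toLex (f m) := by
  classical
  haveI := hfin
  by_contra hcon
  push_neg at hcon
  set v : Fin D → (MvPolynomial (Fin n) K ⧸ J) :=
    fun i => Ideal.Quotient.mk J (monomial (b i) (1 : K)) with hv
  have hmle : (m : ℕ) ≤ D := m.isLt.le
  set u : Fin (m : ℕ) → (MvPolynomial (Fin n) K ⧸ J) :=
    fun j => v (Fin.castLE hmle j) with hu
  set N := Submodule.span K (Set.range u) with hN
  have hrank : Module.finrank K N ≤ (m : ℕ) := by
    have := finrank_range_le_card (R := K) u
    simpa [Set.finrank, hN] using this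
  have hle1 : (m : ℕ) + 1 ≤ D := m.isLt
  set w : Fin ((m : ℕ) + 1) → (MvPolynomial (Fin n) K ⧸ J) :=
    fun j => Ideal.Quotient.mk J (monomial (f (Fin.castLE hle1 j)) (1 : K)) with hw
  have hwli : LinearIndependent K w := hfind.comp _ (Fin.castLE_injective hle1)
  have hmem : ∀ j, w j ∈ N := by
    intro j
    have hjm : Fin.castLE hle1 j ≤ m := by
      rw [Fin.le_def]
      simpa using Nat.lt_succ_iff.mp j.isLt
    have h1 : toLex (f (Fin.castLE hle1 j)) ≤ toLex (f m) := hfmono.monotone hjm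
    have hsub : (fun i => Ideal.Quotient.mk J (monomial (b i) (1 : K))) ''
        {i | toLex (b i) ≤ toLex (f (Fin.castLE hle1 j))} ⊆ Set.range u := by
      rintro x ⟨i, hi, rfl⟩
      have him : i < m := by
        have : toLex (b i) < toLex (b m) := lt_of_le_of_lt (le_trans hi h1) hcon
        exact hbmono.lt_iff_lt.mp this
      refine ⟨⟨(i : ℕ), him⟩, ?_⟩
      rfl
    exact Submodule.span_mono hsub (key_span J b hball (f (Fin.castLE hle1 j)))
  set w' : Fin ((m : ℕ) + 1) → N := fun j => ⟨w j, hmem j⟩ with hw'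
  have hwli' : LinearIndependent K w' :=
    LinearIndependent.of_comp N.subtype (by exact hwli)
  have hcard := hwli'.fintype_card_le_finrank
  simp only [Fintype.card_fin] at hcard
  omega
end

section
/- Let J be a proper zero-dimensional ideal of K[X_1,...,X_n] and let d be the degree of the minimal polynomial of X_1 in K[X_1,...,X_n]/J. Then every standard monomial of J (for the lexicographic order with X_1 > ... > X_n) has the form X_1^a · m with 0 ≤ a < d and m a standard monomial of the elimination ideal J ∩ K[X_2,...,X_n] (for the induced lexicographic order on X_2,...,X_n). Consequently, the set {X_1^a · m : 0 ≤ a < d, m a standard monomial of J ∩ K[X_2,...,X_n]} spans K[X_1,...,X_n]/J as a K-vector space. -/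
open MvPolynomial

section Aux

lemma lex_add_left_mono {α : Type*} [LinearOrder α] {b c : α →₀ ℕ} (e : α →₀ ℕ)
    (h : toLex b ≤ toLex c) : toLex (e + b) ≤ toLex (e + c) := by
  rcases ((le_iff_eq_or_lt.mp h).imp id Finsupp.Lex.lt_iff.mp) with h | ⟨i, h1, h2⟩
  · exact le_of_eq (congrArg toLex (congrArg (e + ·) (toLex.injective h)))
  · refine le_of_lt (Finsupp.Lex.lt_iff.mpr ⟨i, fun j hj => ?_, ?_⟩)
    · have : b j = c j := h1 j hj
      simp only [ofLex_toLex, Finsupp.add_apply, this]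
    · have : b i < c i := h2
      simpa only [ofLex_toLex, Finsupp.add_apply] using Nat.add_lt_add_left this (e i)

lemma lex_single_mono {α : Type*} [LinearOrder α] (i : α) {k l : ℕ} (h : k ≤ l) :
    toLex (Finsupp.single i k) ≤ toLex (Finsupp.single i l) := by
  rcases h.lt_or_eq with h | rfl
  · refine le_of_lt (Finsupp.Lex.lt_iff.mpr ⟨i, fun j hj => ?_, ?_⟩)
    · simp only [ofLex_toLex, Finsupp.single_apply]
      rcases eq_or_ne i j with rfl | hij
      · exact absurd hj (lt_irrefl _)
      · simp [hij]
    · simpa [Finsupp.single_apply] using h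
  · rfl

lemma lex_mapDomain_succ_mono {n : ℕ} {b c : Fin n →₀ ℕ} (h : toLex b ≤ toLex c) :
    toLex (Finsupp.mapDomain Fin.succ b) ≤ toLex (Finsupp.mapDomain Fin.succ c) := by
  rcases ((le_iff_eq_or_lt.mp h).imp id Finsupp.Lex.lt_iff.mp) with h | ⟨i, h1, h2⟩
  · exact le_of_eq (congrArg _ (congrArg _ (toLex.injective h)))
  · refine le_of_lt (Finsupp.Lex.lt_iff.mpr ⟨Fin.succ i, fun j hj => ?_, ?_⟩)
    · simp only [ofLex_toLex]
      rcases Fin.eq_zero_or_eq_succ j with rfl | ⟨j', rfl⟩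
      · rw [Finsupp.mapDomain_notin_range, Finsupp.mapDomain_notin_range] <;>
          · rintro ⟨k, hk⟩; exact Fin.succ_ne_zero k hk
      · rw [Finsupp.mapDomain_apply (Fin.succ_injective n),
          Finsupp.mapDomain_apply (Fin.succ_injective n)]
        exact h1 j' (by simpa using hj)
    · simpa only [ofLex_toLex, Finsupp.mapDomain_apply (Fin.succ_injective n)] using h2

lemma decomp {n : ℕ} (a : Fin (n + 1) →₀ ℕ) :
    Finsupp.single 0 (a 0) + Finsupp.mapDomain Fin.succ
      (Finsupp.comapDomain Fin.succ a (Fin.succ_injective n).injOn) = a := by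
  ext i
  rcases Fin.eq_zero_or_eq_succ i with rfl | ⟨j, rfl⟩
  · rw [Finsupp.add_apply, Finsupp.mapDomain_notin_range]
    · simp
    · rintro ⟨k, hk⟩; exact Fin.succ_ne_zero k hk
  · rw [Finsupp.add_apply, Finsupp.mapDomain_apply (Fin.succ_injective n),
      Finsupp.comapDomain_apply, Finsupp.single_apply]
    simp [(Fin.succ_ne_zero j).symm]

lemma isLeadMon_monomial_mul {K : Type*} [Field K] {σ : Type*} [LinearOrder σ]
    {f : MvPolynomial σ K} {m : σ →₀ ℕ} (hf : IsLeadMon f m) (c : σ →₀ ℕ) :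
    monomial c (1 : K) * f ≠ 0 ∧ IsLeadMon (monomial c 1 * f) (c + m) := by
  classical
  have hc : coeff (c + m) (monomial c (1 : K) * f) = coeff m f := by
    simpa using coeff_monomial_mul m c 1 f
  have hm : coeff m f ≠ 0 := mem_support_iff.mp hf.1
  have hmem : (c + m) ∈ (monomial c (1 : K) * f).support := by
    rw [mem_support_iff, hc]; exact hm
  refine ⟨fun h0 => ?_, hmem, fun b hb => ?_⟩
  · rw [h0] at hmem; simp at hmem
  · have hsub := support_mul (monomial c (1 : K)) f hb
    rw [Finset.mem_add] at hsub
    obtain ⟨y, hy, z, hz, rfl⟩ := hsub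
    have hy' : y = c := Finset.mem_singleton.mp (support_monomial_subset hy)
    rw [hy']
    exact lex_add_left_mono c (hf.2 z hz)

lemma aeval_X_eq_sum {K : Type*} [Field K] {n : ℕ} (P : Polynomial K) :
    Polynomial.aeval (X (0 : Fin (n + 1)) : MvPolynomial (Fin (n + 1)) K) P
      = ∑ i ∈ Finset.range (P.natDegree + 1), monomial (Finsupp.single 0 i) (P.coeff i) := by
  rw [Polynomial.aeval_eq_sum_range]
  refine Finset.sum_congr rfl fun i _ => ?_
  rw [X_pow_eq_monomial, smul_monomial, smul_eq_mul, mul_one]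

lemma isLeadMon_aeval {K : Type*} [Field K] {n : ℕ} {P : Polynomial K} (hP : P.Monic) :
    IsLeadMon (Polynomial.aeval (X (0 : Fin (n + 1)) : MvPolynomial (Fin (n + 1)) K) P)
      (Finsupp.single 0 P.natDegree) := by
  classical
  constructor
  · rw [mem_support_iff, aeval_X_eq_sum, coeff_sum]
    rw [Finset.sum_eq_single_of_mem P.natDegree (Finset.self_mem_range_succ _)]
    · rw [coeff_monomial, if_pos rfl, hP.coeff_natDegree]; exact one_ne_zero
    · intro i _ hi
      rw [coeff_monomial, if_neg]
      exact fun h => hi (Finsupp.single_injective 0 h)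
  · intro b hb
    rw [mem_support_iff, aeval_X_eq_sum, coeff_sum] at hb
    obtain ⟨i, hi, hne⟩ := Finset.exists_ne_zero_of_sum_ne_zero hb
    rw [coeff_monomial] at hne
    have hbi : Finsupp.single (0 : Fin (n + 1)) i = b := by
      by_contra h; rw [if_neg h] at hne; exact hne rfl
    rw [← hbi]
    exact lex_single_mono 0 (Nat.lt_succ_iff.mp (Finset.mem_range.mp hi))

lemma span_std {K : Type*} [Field K] {n : ℕ} (J : Ideal (MvPolynomial (Fin (n + 1)) K))
    (S : Set (MvPolynomial (Fin (n + 1)) K ⧸ J))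
    (hS : ∀ a, IsStdMon J a → Ideal.Quotient.mk J (monomial a (1 : K)) ∈ S)
    (f : MvPolynomial (Fin (n + 1)) K) :
    Ideal.Quotient.mk J f ∈ Submodule.span K S := by
  classical
  haveI : WellFoundedLT (Lex (Fin (n + 1) →₀ ℕ)) := Finsupp.Lex.wellFoundedLT_of_finite
  set L : MvPolynomial (Fin (n + 1)) K → WithBot (Lex (Fin (n + 1) →₀ ℕ)) :=
    fun g => g.support.sup fun b => ((toLex b : Lex (Fin (n + 1) →₀ ℕ)) : WithBot _) with hL
  suffices h : ∀ t : WithBot (Lex (Fin (n + 1) →₀ ℕ)), ∀ g, L g ≤ t →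
      Ideal.Quotient.mk J g ∈ Submodule.span K S by
    exact h (L f) f le_rfl
  intro t
  induction t using WellFoundedLT.induction with
  | _ t IH =>
  intro g hg
  rcases eq_or_ne g 0 with rfl | hg0
  · simp
  obtain ⟨a, haf, hmax⟩ := Finset.exists_max_image g.support (fun b => toLex b)
    (support_nonempty.mpr hg0)
  have hta : ((toLex a : Lex (Fin (n + 1) →₀ ℕ)) : WithBot _) ≤ t := by
    refine le_trans ?_ hg
    simp only [hL]
    exact Finset.le_sup haf
  by_cases hstd : IsStdMon J a
  · -- standard leading monomial: subtract the leading term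
    set c := coeff a g with hc
    set g' := g - monomial a c with hg'
    have hca : coeff a g' = 0 := by simp [hg', coeff_monomial, hc]
    have hsupp : ∀ b ∈ g'.support, toLex b < toLex a := by
      intro b hb
      have hb' := mem_support_iff.mp hb
      rcases eq_or_ne b a with rfl | hba
      · exact absurd hca hb'
      · have hbf : coeff b g ≠ 0 := by
          intro h; apply hb'
          simp [hg', coeff_monomial, h, Ne.symm hba]
        exact lt_of_le_of_ne (hmax b (mem_support_iff.mpr hbf))
          (fun he => hba (toLex.injective he))
    have hlt : L g' < ((toLex a : Lex (Fin (n + 1) →₀ ℕ)) : WithBot _) := by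
      rw [hL, Finset.sup_lt_iff (WithBot.bot_lt_coe _)]
      intro b hb
      exact_mod_cast WithBot.coe_lt_coe.mpr (hsupp b hb)
    have hmem' := IH (L g') (lt_of_lt_of_le hlt hta) g' le_rfl
    have heq : Ideal.Quotient.mk J g
        = Ideal.Quotient.mk J g' + c • Ideal.Quotient.mk J (monomial a (1 : K)) := by
      have h1 : g = g' + c • monomial a (1 : K) := by
        rw [smul_monomial, smul_eq_mul, mul_one, hg', sub_add_cancel]
      have h2 := map_smul (Ideal.Quotient.mkₐ K J) c (monomial a (1 : K))
      rw [Ideal.Quotient.mkₐ_eq_mk] at h2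
      rw [h1, RingHom.map_add, h2]
    rw [heq]
    exact Submodule.add_mem _ hmem'
      (Submodule.smul_mem _ c (Submodule.subset_span (hS a hstd)))
  · -- non-standard: reduce by an element of J
    obtain ⟨p, hpJ, hp0, hplead⟩ := not_not.mp hstd
    have hpa : coeff a p ≠ 0 := mem_support_iff.mp hplead.1
    set c := coeff a g / coeff a p with hc
    set g' := g - C c * p with hg'
    have hca : coeff a g' = 0 := by
      simp [hg', coeff_C_mul, hc, div_mul_cancel₀ _ hpa]
    have hsupp : ∀ b ∈ g'.support, toLex b < toLex a := by
      intro b hb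
      have hb' := mem_support_iff.mp hb
      have hba : b ≠ a := by rintro rfl; exact hb' hca
      refine lt_of_le_of_ne ?_ (fun he => hba (toLex.injective he))
      by_cases hbf : coeff b g = 0
      · have hbp : coeff b p ≠ 0 := by
          intro h; apply hb'; simp [hg', coeff_C_mul, hbf, h]
        exact hplead.2 b (mem_support_iff.mpr hbp)
      · exact hmax b (mem_support_iff.mpr hbf)
    have hlt : L g' < ((toLex a : Lex (Fin (n + 1) →₀ ℕ)) : WithBot _) := by
      rw [hL, Finset.sup_lt_iff (WithBot.bot_lt_coe _)]
      intro b hb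
      exact_mod_cast WithBot.coe_lt_coe.mpr (hsupp b hb)
    have hmem' := IH (L g') (lt_of_lt_of_le hlt hta) g' le_rfl
    have heq : Ideal.Quotient.mk J g = Ideal.Quotient.mk J g' := by
      rw [Ideal.Quotient.eq]
      have : g - g' = C c * p := by rw [hg', sub_sub_cancel]
      rw [this]
      exact J.mul_mem_left _ hpJ
    rw [heq]
    exact hmem'

end Aux

/-- With `n+1 ≥ 2` variables `X_1,…,X_{n+1}` (here `X_1` is the
variable `0` and `X_2,…,X_{n+1}` are obtained via `Fin.succ`), let `J` be a proper
zero-dimensional ideal, `P` the minimal polynomial of `X_1` in `K[X]/J`, and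
`d = deg P`. Then every standard monomial of `J` (for lex with `X_1 > … > X_{n+1}`)
is of the form `X_1^a · m` with `a < d` and `m` a standard monomial of the
elimination ideal `J ∩ K[X_2,…,X_{n+1}]`; consequently the set of all such
`X_1^a · m` spans `K[X]/J` as a `K`-vector space. -/
theorem stmt12 {K : Type*} [Field K] (n : ℕ) (hn : 1 ≤ n)
    (J : Ideal (MvPolynomial (Fin (n + 1)) K)) (hJ : J ≠ ⊤)
    (hfin : FiniteDimensional K (MvPolynomial (Fin (n + 1)) K ⧸ J))
    (P : Polynomial K) (hPmonic : P.Monic)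
    (hPmem : Polynomial.aeval (X (0 : Fin (n + 1)) : MvPolynomial (Fin (n + 1)) K) P ∈ J)
    (hPmin : ∀ Q : Polynomial K, Q.Monic →
        Polynomial.aeval (X (0 : Fin (n + 1)) : MvPolynomial (Fin (n + 1)) K) Q ∈ J →
        P.natDegree ≤ Q.natDegree)
    (d : ℕ) (hd : d = P.natDegree) :
    (∀ a : Fin (n + 1) →₀ ℕ, IsStdMon J a →
        a 0 < d ∧
        IsStdMon
          (J.comap (MvPolynomial.rename (Fin.succ : Fin n → Fin (n + 1)) :
              MvPolynomial (Fin n) K →ₐ[K] MvPolynomial (Fin (n + 1)) K))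
          (Finsupp.comapDomain Fin.succ a (Fin.succ_injective n).injOn)) ∧
    Submodule.span K
      {q : MvPolynomial (Fin (n + 1)) K ⧸ J |
        ∃ a : ℕ, a < d ∧ ∃ m : Fin n →₀ ℕ,
          IsStdMon
            (J.comap (MvPolynomial.rename (Fin.succ : Fin n → Fin (n + 1)) :
                MvPolynomial (Fin n) K →ₐ[K] MvPolynomial (Fin (n + 1)) K)) m ∧
          q = Ideal.Quotient.mk J
              (monomial (Finsupp.single 0 a + Finsupp.mapDomain Fin.succ m) (1 : K))}
      = ⊤ := by
  subst hd
  have hQlead : IsLeadMon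
      (Polynomial.aeval (X (0 : Fin (n + 1)) : MvPolynomial (Fin (n + 1)) K) P)
      (Finsupp.single 0 P.natDegree) := isLeadMon_aeval hPmonic
  have partA : ∀ a : Fin (n + 1) →₀ ℕ, IsStdMon J a → a 0 < P.natDegree := by
    intro a ha
    by_contra hcon
    push_neg at hcon
    apply ha
    have hca : (a - Finsupp.single 0 P.natDegree) + Finsupp.single 0 P.natDegree = a := by
      ext i
      rw [Finsupp.add_apply, Finsupp.tsub_apply]
      rcases eq_or_ne i 0 with rfl | hi
      · simp [Nat.sub_add_cancel hcon]
      · rw [Finsupp.single_apply, if_neg (fun h => hi h.symm)]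
        simp
    obtain ⟨hne, hlead⟩ := isLeadMon_monomial_mul hQlead (a - Finsupp.single 0 P.natDegree)
    rw [hca] at hlead
    exact ⟨_, J.mul_mem_left _ hPmem, hne, hlead⟩
  have partB : ∀ a : Fin (n + 1) →₀ ℕ, IsStdMon J a →
      IsStdMon
        (J.comap (MvPolynomial.rename (Fin.succ : Fin n → Fin (n + 1)) :
            MvPolynomial (Fin n) K →ₐ[K] MvPolynomial (Fin (n + 1)) K))
        (Finsupp.comapDomain Fin.succ a (Fin.succ_injective n).injOn) := by
    intro a ha hcon
    obtain ⟨p, hpJ, hp0, hplead⟩ := hcon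
    apply ha
    classical
    have hrlead : IsLeadMon (rename (Fin.succ : Fin n → Fin (n + 1)) p)
        (Finsupp.mapDomain Fin.succ
          (Finsupp.comapDomain Fin.succ a (Fin.succ_injective n).injOn)) := by
      constructor
      · rw [mem_support_iff, coeff_rename_mapDomain _ (Fin.succ_injective n)]
        exact mem_support_iff.mp hplead.1
      · intro b hb
        rw [support_rename_of_injective (Fin.succ_injective n), Finset.mem_image] at hb
        obtain ⟨b', hb', rfl⟩ := hb
        exact lex_mapDomain_succ_mono (hplead.2 b' hb')
    obtain ⟨hne, hlead⟩ := isLeadMon_monomial_mul hrlead (Finsupp.single 0 (a 0))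
    rw [decomp a] at hlead
    exact ⟨_, J.mul_mem_left _ (Ideal.mem_comap.mp hpJ), hne, hlead⟩
  refine ⟨fun a ha => ⟨partA a ha, partB a ha⟩, ?_⟩
  rw [eq_top_iff]
  intro x _
  obtain ⟨f, rfl⟩ := Ideal.Quotient.mk_surjective x
  refine span_std J _ ?_ f
  intro a ha
  exact ⟨a 0, partA a ha,
    Finsupp.comapDomain Fin.succ a (Fin.succ_injective n).injOn, partB a ha,
    by rw [decomp a]⟩
end

section
/- Let u_1,...,u_t : ℕ^n → K be sequences whose annihilator J = ann(u_1,...,u_t) is zero-dimensional, and let C be a set of polynomials whose residues modulo J span K[X_1,...,X_n]/J as a K-vector space. Then a polynomial f belongs to J if and only if ⟨u_i | c·f⟩ = 0 for every c in C and every i = 1,...,t. -/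
open MvPolynomial

section Aux

variable {K : Type*} [Field K] {n : ℕ}

lemma seqBracket_eq_lc (u : (Fin n →₀ ℕ) → K) (f : MvPolynomial (Fin n) K) :
    seqBracket u f = Finsupp.linearCombination K u (AddMonoidAlgebra.coeffLinearEquiv K f) := by
  rfl

/-- `g ↦ ⟨u ∣ g * f⟩` as a linear map. -/
noncomputable def brkMul (u : (Fin n →₀ ℕ) → K) (f : MvPolynomial (Fin n) K) :
    MvPolynomial (Fin n) K →ₗ[K] K :=
  (Finsupp.linearCombination K u).comp
    ((AddMonoidAlgebra.coeffLinearEquiv K).toLinearMap.comp (LinearMap.mulRight K f))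

lemma brkMul_apply (u : (Fin n →₀ ℕ) → K) (f g : MvPolynomial (Fin n) K) :
    brkMul u f g = seqBracket u (g * f) := seqBracket_eq_lc u (g * f) |>.symm

lemma seqBracket_of_mem {J : Ideal (MvPolynomial (Fin n) K)} {t : ℕ}
    {u : Fin t → (Fin n →₀ ℕ) → K}
    (hJ : ∀ f : MvPolynomial (Fin n) K, f ∈ J ↔ ∀ i, seqAct f (u i) = 0)
    {g : MvPolynomial (Fin n) K} (hg : g ∈ J) (i : Fin t) :
    seqBracket (u i) g = 0 := by
  have h := congrFun ((hJ g).mp hg i) 0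
  simpa [seqAct, MvPolynomial.monomial_zero', Pi.zero_apply] using h

end Aux

/-- Let `u_1,…,u_t` be sequences whose annihilator
`J = ann(u_1,…,u_t)` is zero-dimensional, and let `C` be a set of polynomials
whose residues modulo `J` span `K[X]/J` as a `K`-vector space. Then `f ∈ J`
iff `⟨u_i ∣ c·f⟩ = 0` for every `c ∈ C` and every `i`. -/
theorem stmt13 {K : Type*} [Field K] {n : ℕ} (hn : 1 ≤ n) (t : ℕ)
    (u : Fin t → (Fin n →₀ ℕ) → K)
    (J : Ideal (MvPolynomial (Fin n) K))
    (hJ : ∀ f : MvPolynomial (Fin n) K, f ∈ J ↔ ∀ i, seqAct f (u i) = 0)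
    (hfin : FiniteDimensional K (MvPolynomial (Fin n) K ⧸ J))
    (C : Set (MvPolynomial (Fin n) K))
    (hC : Submodule.span K (Ideal.Quotient.mk J '' C) = ⊤) :
    ∀ f : MvPolynomial (Fin n) K,
      f ∈ J ↔ ∀ c ∈ C, ∀ i, seqBracket (u i) (c * f) = 0 := by
  intro f
  constructor
  · intro hf c _ i
    exact seqBracket_of_mem hJ (Ideal.mul_mem_left J c hf) i
  · intro h
    rw [hJ]
    intro i
    set S : Submodule K (MvPolynomial (Fin n) K) := LinearMap.ker (brkMul (u i) f) with hS
    have hJS : ∀ g ∈ J, g ∈ S := by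
      intro g hg
      simp only [hS, LinearMap.mem_ker, brkMul_apply]
      exact seqBracket_of_mem hJ (Ideal.mul_mem_right f J hg) i
    have hCS : Submodule.span K C ≤ S := by
      rw [Submodule.span_le]
      intro c hc
      simp only [hS, SetLike.mem_coe, LinearMap.mem_ker, brkMul_apply]
      exact h c hc i
    have key : ∀ g : MvPolynomial (Fin n) K, g ∈ S := by
      intro g
      have hmk : Ideal.Quotient.mk J g ∈
          Submodule.map (Ideal.Quotient.mkₐ K J).toLinearMap (Submodule.span K C) := by
        rw [Submodule.map_span]
        have : ⇑(Ideal.Quotient.mkₐ K J).toLinearMap '' C = ⇑(Ideal.Quotient.mk J) '' C := rfl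
        rw [this, hC]
        trivial
      obtain ⟨c, hc, hcg⟩ := hmk
      have hsub : g - c ∈ J := by
        rw [← Ideal.Quotient.eq]
        exact hcg.symm
      have : g = c + (g - c) := by ring
      rw [this]
      exact S.add_mem (hCS hc) (hJS _ hsub)
    funext m
    have := key (MvPolynomial.monomial m 1)
    simpa [hS, LinearMap.mem_ker, brkMul_apply, seqAct] using this
end

section
/- Let I ⊆ K[X_1,...,X_n] be a zero-dimensional ideal whose minimal polynomial of X_n factors as P_min = T·R with T, R ∈ K[X_n] coprime, and let J = I + ⟨R(X_n)⟩. Then: (i) for every f ∈ J, the product T(X_n)·f lies in I, so the map φ : Q* → (K[X_1,...,X_n]/J)* sending ℓ to the linear form (f mod J) ↦ ℓ(T(X_n)·f mod I) is well defined; and (ii) φ is K-linear and surjective. -/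
open MvPolynomial

/-- Let `I ⊆ K[X_1,…,X_{n+1}]` be a zero-dimensional ideal
whose minimal polynomial of the last variable `X_{n+1}` factors as
`P_min = T·R` with `T, R` coprime, and let `J = I + ⟨R(X_{n+1})⟩`. Then:
(i) for every `f ∈ J`, `T(X_{n+1})·f ∈ I`, so the map
`φ : Q* → (K[X]/J)*`, `φ(ℓ)(f mod J) = ℓ(T(X_{n+1})·f mod I)`, is well defined;
(ii) `φ` is `K`-linear and surjective. -/
theorem stmt15 {K : Type*} [Field K] (n : ℕ)
    (I : Ideal (MvPolynomial (Fin (n + 1)) K))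
    (hfin : FiniteDimensional K (MvPolynomial (Fin (n + 1)) K ⧸ I))
    (Pmin T R : Polynomial K) (hPmonic : Pmin.Monic)
    (hPmem : Polynomial.aeval
        (X (Fin.last n) : MvPolynomial (Fin (n + 1)) K) Pmin ∈ I)
    (hPmin : ∀ Q : Polynomial K, Q.Monic →
        Polynomial.aeval (X (Fin.last n) : MvPolynomial (Fin (n + 1)) K) Q ∈ I →
        Pmin.natDegree ≤ Q.natDegree)
    (hfact : Pmin = T * R) (hcop : IsCoprime T R)
    (J : Ideal (MvPolynomial (Fin (n + 1)) K))
    (hJ : J = I ⊔ Ideal.span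
        {Polynomial.aeval (X (Fin.last n) : MvPolynomial (Fin (n + 1)) K) R}) :
    (∀ f ∈ J,
        Polynomial.aeval (X (Fin.last n) : MvPolynomial (Fin (n + 1)) K) T * f ∈ I) ∧
    ∃ φ : Module.Dual K (MvPolynomial (Fin (n + 1)) K ⧸ I) →ₗ[K]
        Module.Dual K (MvPolynomial (Fin (n + 1)) K ⧸ J),
      (∀ (ℓ : Module.Dual K (MvPolynomial (Fin (n + 1)) K ⧸ I))
          (f : MvPolynomial (Fin (n + 1)) K),
        φ ℓ (Ideal.Quotient.mk J f) =
          ℓ (Ideal.Quotient.mk I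
              (Polynomial.aeval (X (Fin.last n) : MvPolynomial (Fin (n + 1)) K) T * f))) ∧
      Function.Surjective φ := by
  have key : ∀ f ∈ J,
      Polynomial.aeval (X (Fin.last n) : MvPolynomial (Fin (n + 1)) K) T * f ∈ I := by
    intro f hf
    rw [hJ, Submodule.mem_sup] at hf
    obtain ⟨i, hi, r, hr, rfl⟩ := hf
    rw [Ideal.mem_span_singleton] at hr
    obtain ⟨c, rfl⟩ := hr
    have hTR : Polynomial.aeval (X (Fin.last n) : MvPolynomial (Fin (n + 1)) K) T *
        Polynomial.aeval (X (Fin.last n) : MvPolynomial (Fin (n + 1)) K) R ∈ I := by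
      rw [← map_mul, ← hfact]; exact hPmem
    have : Polynomial.aeval (X (Fin.last n) : MvPolynomial (Fin (n + 1)) K) T *
        (i + Polynomial.aeval (X (Fin.last n) : MvPolynomial (Fin (n + 1)) K) R * c) =
        Polynomial.aeval (X (Fin.last n) : MvPolynomial (Fin (n + 1)) K) T * i +
        (Polynomial.aeval (X (Fin.last n) : MvPolynomial (Fin (n + 1)) K) T *
          Polynomial.aeval (X (Fin.last n) : MvPolynomial (Fin (n + 1)) K) R) * c := by
      ring
    rw [this]
    exact I.add_mem (I.mul_mem_left _ hi) (I.mul_mem_right _ hTR)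
  refine ⟨key, ?_⟩
  -- the map A →ₗ[K] A ⧸ I, f ↦ mk (T·f)
  set A := MvPolynomial (Fin (n + 1)) K
  set t : A := Polynomial.aeval (X (Fin.last n) : A) T with ht
  let L : A →ₗ[K] A ⧸ I :=
    (Ideal.Quotient.mkₐ K I).toLinearMap ∘ₗ LinearMap.mulLeft K t
  have hL : J.restrictScalars K ≤ LinearMap.ker L := by
    intro f hf
    simp only [LinearMap.mem_ker, L, LinearMap.comp_apply, LinearMap.mulLeft_apply,
      AlgHom.toLinearMap_apply, Ideal.Quotient.mkₐ_eq_mk]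
    rw [Ideal.Quotient.eq_zero_iff_mem]
    exact key f hf
  let ψ0 : (A ⧸ J.restrictScalars K) →ₗ[K] A ⧸ I := Submodule.liftQ _ L hL
  let e : (A ⧸ J.restrictScalars K) ≃ₗ[K] A ⧸ J :=
    Submodule.Quotient.restrictScalarsEquiv K J
  let ψ : (A ⧸ J) →ₗ[K] A ⧸ I := ψ0 ∘ₗ (e.symm : (A ⧸ J) →ₗ[K] A ⧸ J.restrictScalars K)
  have hψ : ∀ f : A, ψ (Ideal.Quotient.mk J f) = Ideal.Quotient.mk I (t * f) := by
    intro f; rfl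
  have hinj : Function.Injective ψ := by
    intro a b hab
    obtain ⟨f, rfl⟩ := Ideal.Quotient.mk_surjective a
    obtain ⟨g, rfl⟩ := Ideal.Quotient.mk_surjective b
    rw [hψ, hψ, Ideal.Quotient.eq] at hab
    have hTf : t * (f - g) ∈ I := by
      have : t * f - t * g = t * (f - g) := by ring
      rwa [this] at hab
    -- coprimality: f - g ∈ J
    obtain ⟨u, v, huv⟩ := hcop
    have huv' : Polynomial.aeval (X (Fin.last n) : A) u * t +
        Polynomial.aeval (X (Fin.last n) : A) v *
          Polynomial.aeval (X (Fin.last n) : A) R = 1 := by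
      rw [ht, ← map_mul, ← map_mul, ← map_add, huv, map_one]
    have hfg : f - g = Polynomial.aeval (X (Fin.last n) : A) u * (t * (f - g)) +
        Polynomial.aeval (X (Fin.last n) : A) R *
          (Polynomial.aeval (X (Fin.last n) : A) v * (f - g)) := by
      linear_combination (g - f) * huv'
    have hmem : f - g ∈ J := by
      rw [hJ, hfg]
      refine Submodule.add_mem_sup (I.mul_mem_left _ hTf) ?_
      exact Ideal.mul_mem_right _ _ (Ideal.subset_span rfl)
    rw [Ideal.Quotient.eq]
    exact hmem
  refine ⟨ψ.dualMap, ?_, ?_⟩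
  · intro ℓ f
    rw [LinearMap.dualMap_apply, hψ]
  · exact ψ.dualMap_surjective_of_injective hinj
end

section
/- Let I ⊆ K[X_1,...,X_n] be a zero-dimensional ideal whose minimal polynomial of X_n factors as P_min = P_1^{e_1} ··· P_K^{e_K}, where P_1,...,P_K are pairwise distinct monic irreducible polynomials in K[X_n] and e_k ≥ 1 for all k. Set J_k = I + ⟨P_k(X_n)^{e_k}⟩ for k = 1,...,K. Then the ideals J_1,...,J_K are pairwise comaximal (J_k + J_{k'} = K[X_1,...,X_n] for k ≠ k') and I = J_1 ∩ ... ∩ J_K. -/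
open MvPolynomial

/-- Let `I ⊆ K[X_1,…,X_{n+1}]` be a zero-dimensional ideal whose
minimal polynomial of the last variable `X_{n+1}` factors as
`P_min = P_1^{e_1} ⋯ P_N^{e_N}` with `P_1,…,P_N` pairwise distinct monic
irreducible polynomials and `e_k ≥ 1`. Set `J_k = I + ⟨P_k(X_{n+1})^{e_k}⟩`.
Then the `J_k` are pairwise comaximal and `I = J_1 ∩ … ∩ J_N`. -/
theorem stmt17 {K : Type*} [Field K] (n : ℕ)
    (I : Ideal (MvPolynomial (Fin (n + 1)) K))
    (hfin : FiniteDimensional K (MvPolynomial (Fin (n + 1)) K ⧸ I))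
    (N : ℕ) (P : Fin N → Polynomial K) (e : Fin N → ℕ)
    (hmonic : ∀ k, (P k).Monic) (hirr : ∀ k, Irreducible (P k))
    (hdist : ∀ k k', k ≠ k' → P k ≠ P k') (he : ∀ k, 1 ≤ e k)
    (Pmin : Polynomial K) (hPdef : Pmin = ∏ k, P k ^ e k)
    (hPmem : Polynomial.aeval
        (X (Fin.last n) : MvPolynomial (Fin (n + 1)) K) Pmin ∈ I)
    (hPmin : ∀ Q : Polynomial K, Q.Monic →
        Polynomial.aeval (X (Fin.last n) : MvPolynomial (Fin (n + 1)) K) Q ∈ I →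
        Pmin.natDegree ≤ Q.natDegree)
    (J : Fin N → Ideal (MvPolynomial (Fin (n + 1)) K))
    (hJ : ∀ k, J k = I ⊔ Ideal.span
        {Polynomial.aeval (X (Fin.last n) : MvPolynomial (Fin (n + 1)) K)
          (P k ^ e k)}) :
    (∀ k k', k ≠ k' → J k ⊔ J k' = ⊤) ∧ I = ⨅ k, J k := by
  set x : MvPolynomial (Fin (n + 1)) K := X (Fin.last n) with hx
  set Q : Fin N → MvPolynomial (Fin (n + 1)) K :=
    fun k => Polynomial.aeval x (P k ^ e k) with hQ
  -- pairwise coprimality of the Q k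
  have hcop : ∀ k k', k ≠ k' → IsCoprime (Q k) (Q k') := by
    intro k k' hkk'
    have h1 : IsCoprime (P k) (P k') := by
      rw [(hirr k).coprime_iff_not_dvd]
      intro hdvd
      exact hdist k k' hkk'
        (Polynomial.eq_of_monic_of_associated (hmonic k) (hmonic k')
          ((hirr k).associated_of_dvd (hirr k') hdvd))
    have h2 : IsCoprime (P k ^ e k) (P k' ^ e k') := h1.pow
    exact h2.map (Polynomial.aeval (R := K) x).toRingHom
  -- comaximality of the J k
  have hcomax : ∀ k k', k ≠ k' → J k ⊔ J k' = ⊤ := by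
    intro k k' hkk'
    have h2 : Ideal.span {Q k} ⊔ Ideal.span {Q k'} = ⊤ :=
      (Ideal.isCoprime_iff_sup_eq.mp
        ((Ideal.isCoprime_span_singleton_iff _ _).mpr (hcop k k' hkk')))
    have h3 : Ideal.span {Q k} ⊔ Ideal.span {Q k'} ≤ J k ⊔ J k' := by
      apply sup_le_sup
      · rw [hJ k]; exact le_sup_right
      · rw [hJ k']; exact le_sup_right
    exact top_le_iff.mp (h2 ▸ h3)
  refine ⟨hcomax, le_antisymm (le_iInf fun k => by rw [hJ k]; exact le_sup_left) ?_⟩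
  -- pairwise comaximal ⇒ inf ≤ prod
  have key : ∀ s : Finset (Fin N), (s.inf J) ≤ ∏ k ∈ s, J k := by
    intro s
    induction s using Finset.induction with
    | empty => simp
    | @insert a s ha ih =>
      rw [Finset.inf_insert, Finset.prod_insert ha]
      have htop : J a ⊔ ∏ k ∈ s, J k = ⊤ :=
        Ideal.sup_prod_eq_top fun i hi => hcomax a i (fun h => ha (h ▸ hi))
      calc J a ⊓ s.inf J ≤ J a ⊓ ∏ k ∈ s, J k := inf_le_inf_left _ ih
        _ = J a * ∏ k ∈ s, J k := (Ideal.mul_eq_inf_of_coprime htop).symm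
  -- prod of J k ≤ I ⊔ span of product
  have key2 : ∀ s : Finset (Fin N),
      (∏ k ∈ s, J k) ≤ I ⊔ Ideal.span {Polynomial.aeval x (∏ k ∈ s, P k ^ e k)} := by
    intro s
    induction s using Finset.induction with
    | empty => simp [Ideal.span_singleton_one]
    | @insert a s ha ih =>
      rw [Finset.prod_insert ha, Finset.prod_insert ha, hJ a]
      calc (I ⊔ Ideal.span {Q a}) * ∏ k ∈ s, J k
          ≤ (I ⊔ Ideal.span {Q a}) *
            (I ⊔ Ideal.span {Polynomial.aeval x (∏ k ∈ s, P k ^ e k)}) :=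
            Ideal.mul_mono_right ih
        _ ≤ I ⊔ Ideal.span {Polynomial.aeval x (P a ^ e a * ∏ k ∈ s, P k ^ e k)} := by
            rw [Ideal.sup_mul, Ideal.mul_sup, Ideal.mul_sup, map_mul,
              ← Ideal.span_singleton_mul_span_singleton]
            refine sup_le (sup_le (le_sup_left.trans' Ideal.mul_le_left)
              (le_sup_left.trans' Ideal.mul_le_left)) (sup_le
              (le_sup_left.trans' Ideal.mul_le_right) le_sup_right)
  have := (key Finset.univ).trans (key2 Finset.univ)
  rw [Finset.inf_univ_eq_iInf] at this
  refine this.trans ?_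
  rw [← hPdef]
  exact sup_le le_rfl ((Ideal.span_singleton_le_iff_mem I).mpr hPmem)
end
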